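/- Let λ ∈ ℂ ∪ {∞}. Every Leibniz 2-cocycle χ : W_B(λ) × W_B(λ) → ℂ (a bilinear map satisfying χ([x,y],z) = χ(x,[y,z]) + χ([x,z],y) for all x, y, z) is alternating, i.e., χ(x,y) = −χ(y,x) for all x, y ∈ W_B(λ). -/

import Mathlib

def lamTerm (lam : Option ℂ) (n : ℤ) : ℂ :=
  match lam with
  | some l => (n : ℂ) * ((n : ℂ) + 1) * l
  | none => (n : ℂ) ^ 2

lemma lamTerm_zero (lam : Option ℂ) : lamTerm lam 0 = 0 := by
  cases lam <;> simp [lamTerm]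

/-- every Leibniz 2-cocycle on `W_B(λ)` with trivial coefficients is
alternating. -/
theorem stmt_12 (lam : Option ℂ) (L : Type) [LieRing L] [LieAlgebra ℂ L]
    (b : Module.Basis (ℤ ⊕ ℤ) ℂ L)
    (hLL : ∀ n m : ℤ,
      ⁅b (Sum.inl n), b (Sum.inl m)⁆ = ((m : ℂ) - (n : ℂ)) • b (Sum.inl (n + m)))
    (hLB : ∀ n m : ℤ,
      ⁅b (Sum.inl n), b (Sum.inr m)⁆ =
        ((m : ℂ) - (if n + m = 0 then lamTerm lam n else 0)) • b (Sum.inr (n + m)))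
    (hBB : ∀ n m : ℤ, ⁅b (Sum.inr n), b (Sum.inr m)⁆ = 0)
    (χ : L →ₗ[ℂ] L →ₗ[ℂ] ℂ)
    (hχ : ∀ x y z : L, χ ⁅x, y⁆ z = χ x ⁅y, z⁆ + χ ⁅x, z⁆ y) :
    ∀ x y : L, χ x y = -χ y x := by
  classical
  set T : L → L → ℂ := fun u v => χ u v + χ v u with hTdef
  set cc : ℤ → ℤ → ℂ :=
    fun a m => (m : ℂ) - (if a + m = 0 then lamTerm lam a else 0) with hccdef
  have Tsymm : ∀ u v, T u v = T v u := fun u v => add_comm _ _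
  have Tsmul : ∀ (c : ℂ) (u v : L), T u (c • v) = c * T u v := by
    intro c u v
    simp [hTdef, map_smul, LinearMap.smul_apply, smul_eq_mul, mul_add]
  have Tzero : ∀ u : L, T u (0 : L) = 0 := by intro u; simp [hTdef]
  have Tneg : ∀ u v : L, T u (-v) = -T u v := by
    intro u v; simp [hTdef, map_neg, LinearMap.neg_apply]; ring
  have hA : ∀ x y z : L, T x ⁅y, z⁆ + T y ⁅x, z⁆ = 0 := by
    intro x y z
    have h1 := hχ x y z
    have h2 := hχ y x z
    have hsk : ⁅y, x⁆ = -⁅x, y⁆ := (lie_skew y x).symm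
    rw [hsk] at h2
    simp only [map_neg, LinearMap.neg_apply] at h2
    simp only [hTdef]
    linear_combination -h1 - h2
  -- structural equations
  have eLL : ∀ a k m : ℤ, ((m : ℂ) - k) * T (b (Sum.inl a)) (b (Sum.inl (k + m)))
      + ((m : ℂ) - a) * T (b (Sum.inl k)) (b (Sum.inl (a + m))) = 0 := by
    intro a k m
    have h := hA (b (Sum.inl a)) (b (Sum.inl k)) (b (Sum.inl m))
    rw [hLL k m, hLL a m, Tsmul, Tsmul] at h
    exact h
  have eLB : ∀ a k m : ℤ, cc k m * T (b (Sum.inl a)) (b (Sum.inr (k + m)))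
      + cc a m * T (b (Sum.inl k)) (b (Sum.inr (a + m))) = 0 := by
    intro a k m
    have h := hA (b (Sum.inl a)) (b (Sum.inl k)) (b (Sum.inr m))
    rw [hLB k m, hLB a m, Tsmul, Tsmul] at h
    exact h
  have eBL : ∀ a k m : ℤ, -(cc k m * T (b (Sum.inl a)) (b (Sum.inr (k + m))))
      + ((k : ℂ) - a) * T (b (Sum.inr m)) (b (Sum.inl (a + k))) = 0 := by
    intro a k m
    have h := hA (b (Sum.inl a)) (b (Sum.inr m)) (b (Sum.inl k))
    have hsk : ⁅b (Sum.inr m), b (Sum.inl k)⁆ = -⁅b (Sum.inl k), b (Sum.inr m)⁆ :=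
      (lie_skew (b (Sum.inr m)) (b (Sum.inl k))).symm
    rw [hsk, hLB k m, Tneg, Tsmul, hLL a k, Tsmul] at h
    exact h
  have eBB : ∀ n a m : ℤ, cc a m * T (b (Sum.inr n)) (b (Sum.inr (a + m))) = 0 := by
    intro n a m
    have h := hA (b (Sum.inr n)) (b (Sum.inl a)) (b (Sum.inr m))
    rw [hLB a m, Tsmul, hBB n m, Tzero] at h
    simpa using h
  have cc0 : ∀ m : ℤ, cc 0 m = (m : ℂ) := by
    intro m
    simp only [hccdef]
    split_ifs <;> simp [lamTerm_zero]
  have ccne : ∀ a m : ℤ, a + m ≠ 0 → cc a m = (m : ℂ) := by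
    intro a m h
    simp only [hccdef, if_neg h, sub_zero]
  -- L-L pairings
  have fDiagNe : ∀ a : ℤ, a ≠ 0 → T (b (Sum.inl a)) (b (Sum.inl (-a))) = 0 := by
    intro a ha
    have e := eLL a a (-2 * a)
    rw [show a + -2 * a = -a by ring] at e
    have hc : ((-2 * a : ℤ) : ℂ) - (a : ℂ) ≠ 0 := by
      push_cast
      intro h
      have : (a : ℂ) = 0 := by linear_combination -h / 3
      exact ha (by exact_mod_cast this)
    have h3 : (((-2 * a : ℤ) : ℂ) - (a : ℂ)) * T (b (Sum.inl a)) (b (Sum.inl (-a))) = 0 := by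
      push_cast at e ⊢
      linear_combination e / 2
    exact (mul_eq_zero.mp h3).resolve_left hc
  have fAll : ∀ a k : ℤ, T (b (Sum.inl a)) (b (Sum.inl k)) = 0 := by
    intro a k
    by_cases hak : a + k = 0
    · have hk : k = -a := by omega
      subst hk
      by_cases ha : a = 0
      · subst ha
        have e := eLL 0 1 (-1)
        rw [show (1 : ℤ) + -1 = 0 by ring, show (0 : ℤ) + -1 = -1 by ring] at e
        have h1 : T (b (Sum.inl 1)) (b (Sum.inl (-1))) = 0 := fDiagNe 1 one_ne_zero
        rw [h1] at e
        push_cast at e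
        rw [show (-0 : ℤ) = 0 by ring]
        linear_combination -e / 2
      · exact fDiagNe a ha
    · have e := eLL a k 0
      rw [add_zero, add_zero] at e
      rw [Tsymm (b (Sum.inl k))] at e
      have hc : ((a : ℂ) + k) ≠ 0 := by
        intro h
        exact hak (by exact_mod_cast (by push_cast at h ⊢; exact h : ((a + k : ℤ) : ℂ) = 0))
      have h3 : ((a : ℂ) + k) * T (b (Sum.inl a)) (b (Sum.inl k)) = 0 := by
        push_cast at e ⊢
        linear_combination -e
      exact (mul_eq_zero.mp h3).resolve_left hc
  -- L-B pairings
  have gDiagNe : ∀ a : ℤ, a ≠ 0 → T (b (Sum.inl a)) (b (Sum.inr (-a))) = 0 := by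
    intro a ha
    have e := eLB a a (-2 * a)
    rw [show a + -2 * a = -a by ring] at e
    have hcc : cc a (-2 * a) = ((-2 * a : ℤ) : ℂ) := ccne a (-2 * a) (by omega)
    rw [hcc] at e
    have hc : ((-2 * a : ℤ) : ℂ) ≠ 0 := by
      rw [Int.cast_ne_zero]; omega
    have h3 : ((-2 * a : ℤ) : ℂ) * T (b (Sum.inl a)) (b (Sum.inr (-a))) = 0 := by
      linear_combination e / 2
    exact (mul_eq_zero.mp h3).resolve_left hc
  have gAll : ∀ a m : ℤ, T (b (Sum.inl a)) (b (Sum.inr m)) = 0 := by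
    intro a m
    by_cases ham : a + m = 0
    · have hm : m = -a := by omega
      subst hm
      by_cases ha : a = 0
      · subst ha
        rw [show (-0 : ℤ) = 0 by ring]
        cases lam with
        | some l =>
          have e := eLB 0 (-1) 1
          rw [show (-1 : ℤ) + 1 = 0 by ring, show (0 : ℤ) + 1 = 1 by ring] at e
          have h1 : T (b (Sum.inl (-1))) (b (Sum.inr 1)) = 0 := by
            have := gDiagNe (-1) (by norm_num)
            rwa [show -(-1 : ℤ) = 1 by ring] at this
          rw [h1, cc0] at e
          have hcc : cc (-1) 1 = 1 := by
            simp only [hccdef, if_pos (show (-1 : ℤ) + 1 = 0 by ring)]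
            simp [lamTerm]
          rw [hcc] at e
          linear_combination e
        | none =>
          have e := eLB 0 1 (-1)
          rw [show (1 : ℤ) + -1 = 0 by ring, show (0 : ℤ) + -1 = -1 by ring] at e
          have h1 : T (b (Sum.inl 1)) (b (Sum.inr (-1))) = 0 := gDiagNe 1 one_ne_zero
          rw [h1, cc0] at e
          have hcc : cc 1 (-1) = -2 := by
            simp only [hccdef, if_pos (show (1 : ℤ) + -1 = 0 by ring)]
            simp [lamTerm]; ring
          rw [hcc] at e
          linear_combination -e / 2
      · exact gDiagNe a ha
    · have e := eBL a 0 m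
      rw [zero_add, add_zero, cc0] at e
      rw [Tsymm (b (Sum.inr m))] at e
      have hc : ((m : ℂ) + a) ≠ 0 := by
        intro h
        apply ham
        have : ((a + m : ℤ) : ℂ) = 0 := by push_cast; linear_combination h
        exact_mod_cast this
      have h3 : ((m : ℂ) + a) * T (b (Sum.inl a)) (b (Sum.inr m)) = 0 := by
        push_cast at e ⊢
        linear_combination -e
      exact (mul_eq_zero.mp h3).resolve_left hc
  -- B-B pairings
  have hBBAll : ∀ n m : ℤ, T (b (Sum.inr n)) (b (Sum.inr m)) = 0 := by
    intro n m
    by_cases hm : m = 0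
    · subst hm
      cases lam with
      | some l =>
        have e := eBB n (-1) 1
        rw [show (-1 : ℤ) + 1 = 0 by ring] at e
        have hcc : cc (-1) 1 = 1 := by
          simp only [hccdef, if_pos (show (-1 : ℤ) + 1 = 0 by ring)]
          simp [lamTerm]
        rw [hcc] at e
        linear_combination e
      | none =>
        have e := eBB n 1 (-1)
        rw [show (1 : ℤ) + -1 = 0 by ring] at e
        have hcc : cc 1 (-1) = -2 := by
          simp only [hccdef, if_pos (show (1 : ℤ) + -1 = 0 by ring)]
          simp [lamTerm]; ring
        rw [hcc] at e
        linear_combination -e / 2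
    · have e := eBB n 0 m
      rw [zero_add, cc0] at e
      have hc : (m : ℂ) ≠ 0 := Int.cast_ne_zero.mpr hm
      exact (mul_eq_zero.mp e).resolve_left hc
  have key : ∀ i j : ℤ ⊕ ℤ, T (b i) (b j) = 0 := by
    rintro (a | a) (m | m)
    · exact fAll a m
    · exact gAll a m
    · rw [Tsymm]; exact gAll m a
    · exact hBBAll a m
  have hmap : (χ + χ.flip : L →ₗ[ℂ] L →ₗ[ℂ] ℂ) = 0 := by
    apply b.ext
    intro i
    apply b.ext
    intro j
    have := key i j
    simp only [hTdef] at this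
    simpa [LinearMap.add_apply, LinearMap.flip_apply] using this
  intro x y
  have h := DFunLike.congr_fun (DFunLike.congr_fun hmap x) y
  simp only [LinearMap.add_apply, LinearMap.flip_apply, LinearMap.zero_apply] at h
  linear_combination h
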